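/- The limit as r → ∞ of ψ₁(r)/ψ₂(r) equals 1/(ε(c-ε)). -/

import Mathlib

open MeasureTheory Real Filter

open Set


lemma gauss_int {a : ℝ} (ha : 0 < a) : Integrable (fun u : ℝ => Real.exp (-a * u ^ 2 / 2)) := by
  have h := integrable_exp_neg_mul_sq (show (0:ℝ) < a / 2 by linarith)
  refine h.congr (Filter.Eventually.of_forall fun u => by ring_nf)

lemma sq_half_tendsto {a : ℝ} (ha : 0 < a) :
    Tendsto (fun u : ℝ => a * u ^ 2 / 2) atTop atTop :=
  ((tendsto_pow_atTop (two_ne_zero)).const_mul_atTop ha).atTop_div_const two_pos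

lemma gauss_exp_tendsto {a : ℝ} (ha : 0 < a) :
    Tendsto (fun u : ℝ => Real.exp (-a * u ^ 2 / 2)) atTop (nhds 0) := by
  apply Real.tendsto_exp_atBot.comp
  have h := tendsto_neg_atBot_iff.mpr (sq_half_tendsto ha)
  exact h.congr fun u => by ring

lemma gauss_hasDeriv (a x : ℝ) :
    HasDerivAt (fun u : ℝ => Real.exp (-a * u ^ 2 / 2)) (-a * x * Real.exp (-a * x ^ 2 / 2)) x := by
  have h1 : HasDerivAt (fun u : ℝ => -a * u ^ 2 / 2) (-a * x) x := by
    have := ((hasDerivAt_pow 2 x).const_mul (-a)).div_const 2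
    simpa using this.congr_deriv (by ring)
  simpa [mul_comm] using h1.exp

lemma tail_upper {a r : ℝ} (ha : 0 < a) (hr : 0 < r) :
    (∫ u in Set.Ioi r, Real.exp (-a * u ^ 2 / 2)) ≤ Real.exp (-a * r ^ 2 / 2) / (a * r) := by
  set g' : ℝ → ℝ := fun x => x / r * Real.exp (-a * x ^ 2 / 2) with hg'
  have hderiv : ∀ x ∈ Set.Ici r, HasDerivAt (fun u : ℝ => -Real.exp (-a * u ^ 2 / 2) / (a * r)) (g' x) x := by
    intro x _
    have := ((gauss_hasDeriv a x).neg).div_const (a * r)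
    refine this.congr_deriv ?_
    simp only [hg']
    field_simp
  have hpos : ∀ x ∈ Set.Ioi r, 0 ≤ g' x := by
    intro x hx
    have hx' : 0 < x := lt_trans hr hx
    positivity
  have htend : Tendsto (fun u : ℝ => -Real.exp (-a * u ^ 2 / 2) / (a * r)) atTop (nhds 0) := by
    have := ((gauss_exp_tendsto ha).neg).div_const (a * r)
    simpa using this
  have hval : ∫ x in Set.Ioi r, g' x = Real.exp (-a * r ^ 2 / 2) / (a * r) := by
    rw [integral_Ioi_of_hasDerivAt_of_nonneg' hderiv hpos htend]
    field_simp
    ring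
  have hint : IntegrableOn g' (Set.Ioi r) :=
    integrableOn_Ioi_deriv_of_nonneg' hderiv hpos htend
  rw [← hval]
  refine setIntegral_mono_on ((gauss_int ha).integrableOn) hint measurableSet_Ioi ?_
  intro x hx
  have hx' : r < x := hx
  have h1 : (1:ℝ) ≤ x / r := (one_le_div hr).mpr hx'.le
  have h2 := mul_le_mul_of_nonneg_right h1 (Real.exp_pos (-a * x ^ 2 / 2)).le
  simpa [hg'] using h2

lemma ratio_hasDeriv {a : ℝ} (ha : 0 < a) (x : ℝ) :
    HasDerivAt (fun u : ℝ => -(u / (a * u ^ 2 + 1)) * Real.exp (-a * u ^ 2 / 2))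
      ((a ^ 2 * x ^ 4 + 2 * a * x ^ 2 - 1) / (a * x ^ 2 + 1) ^ 2 * Real.exp (-a * x ^ 2 / 2)) x := by
  have hden : a * x ^ 2 + 1 ≠ 0 := by positivity
  have hd : HasDerivAt (fun u : ℝ => a * u ^ 2 + 1) (a * (2 * x)) x := by
    simpa using ((hasDerivAt_pow 2 x).const_mul a).add_const 1
  have h1 : HasDerivAt (fun u : ℝ => u / (a * u ^ 2 + 1))
      ((1 * (a * x ^ 2 + 1) - x * (a * (2 * x))) / (a * x ^ 2 + 1) ^ 2) x :=
    (hasDerivAt_id x).div hd hden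
  have h2 := (h1.neg.mul (gauss_hasDeriv a x))
  refine h2.congr_deriv ?_
  simp only [Pi.neg_apply]
  field_simp
  ring

lemma tail_lower {a r : ℝ} (ha : 0 < a) (hr : 0 < r) (hr2 : 1 ≤ a * r ^ 2) :
    r / (a * r ^ 2 + 1) * Real.exp (-a * r ^ 2 / 2) ≤ ∫ u in Set.Ioi r, Real.exp (-a * u ^ 2 / 2) := by
  set g' : ℝ → ℝ := fun x =>
    (a ^ 2 * x ^ 4 + 2 * a * x ^ 2 - 1) / (a * x ^ 2 + 1) ^ 2 * Real.exp (-a * x ^ 2 / 2) with hg'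
  have hderiv : ∀ x ∈ Set.Ici r,
      HasDerivAt (fun u : ℝ => -(u / (a * u ^ 2 + 1)) * Real.exp (-a * u ^ 2 / 2)) (g' x) x :=
    fun x _ => ratio_hasDeriv ha x
  have hpos : ∀ x ∈ Set.Ioi r, 0 ≤ g' x := by
    intro x hx
    have hx' : r < x := hx
    have h1 : a * r ^ 2 ≤ a * x ^ 2 :=
      mul_le_mul_of_nonneg_left (pow_le_pow_left₀ hr.le hx'.le 2) ha.le
    have hnum : 0 ≤ a ^ 2 * x ^ 4 + 2 * a * x ^ 2 - 1 := by nlinarith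
    have : (0:ℝ) < (a * x ^ 2 + 1) ^ 2 := by positivity
    exact mul_nonneg (div_nonneg hnum this.le) (Real.exp_pos _).le
  have htend : Tendsto (fun u : ℝ => -(u / (a * u ^ 2 + 1)) * Real.exp (-a * u ^ 2 / 2))
      atTop (nhds 0) := by
    have h1 : Tendsto (fun u : ℝ => u / (a * u ^ 2 + 1)) atTop (nhds 0) := by
      have h2 : Tendsto (fun u : ℝ => a * u + 1 / u) atTop atTop :=
        (tendsto_id.const_mul_atTop ha).atTop_add (tendsto_inv_atTop_zero.congr (fun u => (one_div u).symm))
      have h3 := h2.inv_tendsto_atTop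
      refine h3.congr' ?_
      filter_upwards [eventually_gt_atTop (0:ℝ)] with u hu
      simp only [Pi.inv_apply]
      rw [eq_div_iff (by positivity), inv_mul_eq_div, div_eq_iff (by positivity)]
      field_simp
    have := (h1.neg).mul (gauss_exp_tendsto ha)
    simpa using this
  have hval : ∫ x in Set.Ioi r, g' x = r / (a * r ^ 2 + 1) * Real.exp (-a * r ^ 2 / 2) := by
    rw [integral_Ioi_of_hasDerivAt_of_nonneg' hderiv hpos htend]
    ring
  have hint : IntegrableOn g' (Set.Ioi r) :=
    integrableOn_Ioi_deriv_of_nonneg' hderiv hpos htend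
  rw [← hval]
  refine setIntegral_mono_on hint ((gauss_int ha).integrableOn) measurableSet_Ioi ?_
  intro x _
  have h1 : a ^ 2 * x ^ 4 + 2 * a * x ^ 2 - 1 ≤ (a * x ^ 2 + 1) ^ 2 := by nlinarith
  have h2 : (0:ℝ) < (a * x ^ 2 + 1) ^ 2 := by positivity
  have h3 : (a ^ 2 * x ^ 4 + 2 * a * x ^ 2 - 1) / (a * x ^ 2 + 1) ^ 2 ≤ 1 :=
    (div_le_one h2).mpr h1
  have h4 := mul_le_mul_of_nonneg_right h3 (Real.exp_pos (-a * x ^ 2 / 2)).le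
  simpa [hg'] using h4

lemma tail_tendsto {a : ℝ} (ha : 0 < a) :
    Tendsto (fun s : ℝ => s * Real.exp (a * s ^ 2 / 2) * ∫ u in Set.Ioi s, Real.exp (-a * u ^ 2 / 2))
      atTop (nhds (1 / a)) := by
  have hlowlim : Tendsto (fun s : ℝ => s ^ 2 / (a * s ^ 2 + 1)) atTop (nhds (1 / a)) := by
    have hb : Tendsto (fun s : ℝ => a + 1 / s ^ 2) atTop (nhds a) := by
      have h2 : Tendsto (fun s : ℝ => 1 / s ^ 2) atTop (nhds 0) := by
        have h3 : Tendsto (fun s : ℝ => s ^ 2) atTop atTop := tendsto_pow_atTop two_ne_zero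
        have := h3.inv_tendsto_atTop
        exact this.congr fun s => (one_div _).symm
      simpa using tendsto_const_nhds.add h2
    have h : Tendsto (fun s : ℝ => 1 / (a + 1 / s ^ 2)) atTop (nhds (1 / a)) :=
      (tendsto_const_nhds (x := (1:ℝ))).div hb ha.ne'
    refine h.congr' ?_
    filter_upwards [eventually_gt_atTop (0:ℝ)] with s hs
    field_simp
  refine tendsto_of_tendsto_of_tendsto_of_le_of_le' hlowlim tendsto_const_nhds ?_ ?_
  · filter_upwards [eventually_ge_atTop (max 1 (1/a))] with s hs
    have hs1 : (1:ℝ) ≤ s := le_trans (le_max_left _ _) hs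
    have hs0 : 0 < s := by linarith
    have hsa : 1 / a ≤ s := le_trans (le_max_right _ _) hs
    have hr2 : 1 ≤ a * s ^ 2 := by
      have := mul_le_mul_of_nonneg_left hsa ha.le
      rw [mul_one_div, div_self ha.ne'] at this
      nlinarith
    have hl := tail_lower ha hs0 hr2
    have hmul := mul_le_mul_of_nonneg_left hl (by positivity : 0 ≤ s * Real.exp (a * s ^ 2 / 2))
    calc s ^ 2 / (a * s ^ 2 + 1)
        = s * Real.exp (a * s ^ 2 / 2) * (s / (a * s ^ 2 + 1) * Real.exp (-a * s ^ 2 / 2)) := by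
          rw [show -a * s ^ 2 / 2 = -(a * s ^ 2 / 2) by ring, Real.exp_neg]
          field_simp
      _ ≤ _ := hmul
  · filter_upwards [eventually_gt_atTop (0:ℝ)] with s hs0
    have hu := tail_upper (a := a) ha hs0
    have hmul := mul_le_mul_of_nonneg_left hu (by positivity : 0 ≤ s * Real.exp (a * s ^ 2 / 2))
    calc s * Real.exp (a * s ^ 2 / 2) * ∫ u in Set.Ioi s, Real.exp (-a * u ^ 2 / 2)
        ≤ s * Real.exp (a * s ^ 2 / 2) * (Real.exp (-a * s ^ 2 / 2) / (a * s)) := hmul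
      _ = 1 / a := by
          rw [show -a * s ^ 2 / 2 = -(a * s ^ 2 / 2) by ring, Real.exp_neg]
          rw [eq_div_iff ha.ne']
          field_simp

lemma I_eq {a : ℝ} (ha : 0 < a) {s : ℝ} (hs : 0 ≤ s) :
    (∫ u in Set.Ioi s, Real.exp (-a * u ^ 2 / 2)) =
      (∫ u in Set.Ioi (0:ℝ), Real.exp (-a * u ^ 2 / 2)) - ∫ u in (0:ℝ)..s, Real.exp (-a * u ^ 2 / 2) := by
  rw [intervalIntegral.integral_of_le hs]
  have hu : Set.Ioc 0 s ∪ Set.Ioi s = Set.Ioi (0:ℝ) := Set.Ioc_union_Ioi_eq_Ioi hs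
  have hdisj : Disjoint (Set.Ioc (0:ℝ) s) (Set.Ioi s) := by
    rw [Set.disjoint_left]
    intro x hx hx'
    exact absurd hx.2 (not_le.mpr hx')
  have := setIntegral_union hdisj measurableSet_Ioi ((gauss_int ha).integrableOn)
    ((gauss_int ha).integrableOn) (f := fun u : ℝ => Real.exp (-a * u ^ 2 / 2))
  rw [hu] at this
  rw [this]
  ring

lemma I_continuousOn {a : ℝ} (ha : 0 < a) :
    ContinuousOn (fun s : ℝ => ∫ u in Set.Ioi s, Real.exp (-a * u ^ 2 / 2)) (Set.Ici 0) := by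
  have hprim : Continuous (fun s : ℝ => ∫ u in (0:ℝ)..s, Real.exp (-a * u ^ 2 / 2)) :=
    intervalIntegral.continuous_primitive (fun a' b' => (gauss_int ha).intervalIntegrable) 0
  have hc : Continuous (fun s : ℝ =>
      (∫ u in Set.Ioi (0:ℝ), Real.exp (-a * u ^ 2 / 2)) - ∫ u in (0:ℝ)..s, Real.exp (-a * u ^ 2 / 2)) :=
    continuous_const.sub hprim
  exact hc.continuousOn.congr fun s hs => I_eq ha hs

lemma lhop {f g G : ℝ → ℝ} {L : ℝ}
    (hfc : ContinuousOn f (Set.Ici (0:ℝ)))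
    (hgc : ContinuousOn g (Set.Ici (1:ℝ)))
    (hG : ∀ x : ℝ, 1 ≤ x → HasDerivAt G (g x) x)
    (hGtop : Tendsto G atTop atTop)
    (hgpos : ∀ᶠ s in atTop, 0 < g s)
    (hratio : Tendsto (fun s => f s / g s) atTop (nhds L)) :
    Tendsto (fun r => (∫ s in (0:ℝ)..r, f s) / G r) atTop (nhds L) := by
  rw [Metric.tendsto_nhds]
  intro δ hδ
  have hδ4 : 0 < δ / 4 := by linarith
  -- find R
  have hev : ∀ᶠ s in atTop, 0 < g s ∧ |f s - L * g s| ≤ δ / 4 * g s := by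
    have h1 := hratio.eventually (Metric.ball_mem_nhds L hδ4)
    filter_upwards [h1, hgpos] with s h1 h2
    refine ⟨h2, ?_⟩
    have : |f s / g s - L| < δ / 4 := by simpa [Real.dist_eq] using h1
    have h3 : |f s - L * g s| = |f s / g s - L| * g s := by
      have h4 : f s / g s - L = (f s - L * g s) / g s := by field_simp
      rw [h4, abs_div, abs_of_pos h2, div_mul_cancel₀ _ h2.ne']
    rw [h3]
    exact le_of_lt (by nlinarith [abs_nonneg (f s / g s - L)])
  obtain ⟨R₀, hR₀⟩ := eventually_atTop.mp hev
  set R := max R₀ 1 with hR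
  have hR1 : (1:ℝ) ≤ R := le_max_right _ _
  have hRprop : ∀ s, R ≤ s → 0 < g s ∧ |f s - L * g s| ≤ δ / 4 * g s :=
    fun s hs => hR₀ s (le_trans (le_max_left _ _) hs)
  set C : ℝ := |(∫ s in (0:ℝ)..R, f s) - L * G R| + δ / 4 * |G R| with hC
  have hC0 : 0 ≤ C := by positivity
  have key : ∀ r, R ≤ r → |(∫ s in (0:ℝ)..r, f s) - L * G r| ≤ C + δ / 4 * G r := by
    intro r hr
    have h0R : (0:ℝ) ≤ R := by linarith
    have hIf1 : IntervalIntegrable f volume 0 R := by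
      apply ContinuousOn.intervalIntegrable
      apply hfc.mono
      rw [Set.uIcc_of_le h0R]
      exact fun x hx => hx.1
    have hIf2 : IntervalIntegrable f volume R r := by
      apply ContinuousOn.intervalIntegrable
      apply hfc.mono
      rw [Set.uIcc_of_le hr]
      intro x hx
      exact le_trans h0R hx.1
    have hIg : IntervalIntegrable g volume R r := by
      apply ContinuousOn.intervalIntegrable
      apply hgc.mono
      rw [Set.uIcc_of_le hr]
      intro x hx
      exact le_trans hR1 hx.1
    have hsplit : (∫ s in (0:ℝ)..r, f s) = (∫ s in (0:ℝ)..R, f s) + ∫ s in R..r, f s :=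
      (intervalIntegral.integral_add_adjacent_intervals hIf1 hIf2).symm
    have hGdiff : (∫ s in R..r, g s) = G r - G R := by
      apply intervalIntegral.integral_eq_sub_of_hasDerivAt
      · intro x hx
        rw [Set.uIcc_of_le hr] at hx
        exact hG x (le_trans hR1 hx.1)
      · exact hIg
    have hgnn : ∀ x ∈ Set.Ioc R r, 0 ≤ g x := fun x hx => (hRprop x hx.1.le).1.le
    have habs : |∫ s in R..r, (f s - L * g s)| ≤ δ / 4 * (G r - G R) := by
      rw [intervalIntegral.integral_of_le hr]
      calc |∫ s in Set.Ioc R r, (f s - L * g s)|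
          ≤ ∫ s in Set.Ioc R r, |f s - L * g s| := by
            simpa using norm_integral_le_integral_norm (μ := volume.restrict (Set.Ioc R r))
              (f := fun s => f s - L * g s)
        _ ≤ ∫ s in Set.Ioc R r, δ / 4 * g s := by
            apply setIntegral_mono_on
            · have h5 := (hIf2.sub (hIg.const_mul L)).1.norm
              simpa [Real.norm_eq_abs, IntegrableOn] using h5
            · exact (hIg.const_mul (δ/4)).1
            · exact measurableSet_Ioc
            · intro x hx
              exact (hRprop x hx.1.le).2
        _ = δ / 4 * (G r - G R) := by
            rw [← intervalIntegral.integral_of_le hr, intervalIntegral.integral_const_mul, hGdiff]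
    have hexp : (∫ s in (0:ℝ)..r, f s) - L * G r =
        ((∫ s in (0:ℝ)..R, f s) - L * G R) + ∫ s in R..r, (f s - L * g s) := by
      rw [hsplit, intervalIntegral.integral_sub hIf2 (hIg.const_mul L),
        intervalIntegral.integral_const_mul, hGdiff]
      ring
    calc |(∫ s in (0:ℝ)..r, f s) - L * G r|
        ≤ |(∫ s in (0:ℝ)..R, f s) - L * G R| + |∫ s in R..r, (f s - L * g s)| := by
          rw [hexp]; exact abs_add_le _ _
      _ ≤ |(∫ s in (0:ℝ)..R, f s) - L * G R| + δ / 4 * (G r - G R) := by linarith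
      _ ≤ C + δ / 4 * G r := by
          rw [hC]
          have : -(|G R|) ≤ G R := neg_abs_le _
          nlinarith
  -- conclude
  filter_upwards [eventually_ge_atTop R, hGtop.eventually_ge_atTop (max 1 (4 * C / δ + 1))]
    with r hr hGr
  have hG1 : (1:ℝ) ≤ G r := le_trans (le_max_left _ _) hGr
  have hG0 : 0 < G r := by linarith
  have hG2 : 4 * C / δ + 1 ≤ G r := le_trans (le_max_right _ _) hGr
  have hk := key r hr
  rw [Real.dist_eq]
  have heq : (∫ s in (0:ℝ)..r, f s) / G r - L = ((∫ s in (0:ℝ)..r, f s) - L * G r) / G r := by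
    field_simp
  rw [heq, abs_div, abs_of_pos hG0]
  rw [div_lt_iff₀ hG0]
  have hCle : C ≤ δ / 4 * G r := by
    have h6 : δ * (4 * C / δ) = 4 * C := by field_simp
    nlinarith [mul_le_mul_of_nonneg_left hG2 hδ4.le]
  nlinarith

lemma exp_sq_hasDeriv (b x : ℝ) :
    HasDerivAt (fun u : ℝ => Real.exp (b * u ^ 2 / 2)) (b * x * Real.exp (b * x ^ 2 / 2)) x := by
  have h1 : HasDerivAt (fun u : ℝ => b * u ^ 2 / 2) (b * x) x := by
    have := ((hasDerivAt_pow 2 x).const_mul b).div_const 2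
    simpa using this.congr_deriv (by ring)
  simpa [mul_comm] using h1.exp

/-- `ψ₁ c ε r = ∫₀^r e^{c s²/2} (∫_s^∞ e^{-(c-ε) u²/2} du) ds`. -/
noncomputable def psi1 (c ε r : ℝ) : ℝ :=
  ∫ s in (0:ℝ)..r, Real.exp (c * s ^ 2 / 2) * ∫ u in Set.Ioi s, Real.exp (-(c - ε) * u ^ 2 / 2)

/-- `ψ₂ ε r = (e^{ε r²/2} - 1)/(r(1+r))`. -/
noncomputable def psi2 (ε r : ℝ) : ℝ :=
  (Real.exp (ε * r ^ 2 / 2) - 1) / (r * (1 + r))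


theorem stmt_2 (c ε : ℝ) (hε : 0 < ε) (hεc : ε < c) :
    Tendsto (fun r : ℝ => psi1 c ε r / psi2 ε r) atTop (nhds (1 / (ε * (c - ε)))) := by
  have ha : 0 < c - ε := by linarith
  set a : ℝ := c - ε with ha'
  set I : ℝ → ℝ := fun s => ∫ u in Set.Ioi s, Real.exp (-a * u ^ 2 / 2) with hI
  set f : ℝ → ℝ := fun s => Real.exp (c * s ^ 2 / 2) * I s with hf
  set g : ℝ → ℝ := fun s => Real.exp (ε * s ^ 2 / 2) * (ε * s ^ 2 - 2) / s ^ 3 with hg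
  set G : ℝ → ℝ := fun r => Real.exp (ε * r ^ 2 / 2) / r ^ 2 with hG
  -- psi1 = primitive of f
  have hpsi1 : ∀ r, psi1 c ε r = ∫ s in (0:ℝ)..r, f s := by
    intro r
    unfold psi1
    rfl
  -- continuity of f
  have hfc : ContinuousOn f (Set.Ici (0:ℝ)) := by
    have h1 : Continuous fun s : ℝ => Real.exp (c * s ^ 2 / 2) := by
      fun_prop
    exact h1.continuousOn.mul (I_continuousOn ha)
  -- continuity of g
  have hgc : ContinuousOn g (Set.Ici (1:ℝ)) := by
    have h1 : Continuous fun s : ℝ =>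
        Real.exp (ε * s ^ 2 / 2) * (ε * s ^ 2 - 2) := by
      fun_prop
    refine ContinuousOn.div h1.continuousOn (continuous_pow 3).continuousOn ?_
    intro x hx
    have : (1:ℝ) ≤ x := hx
    positivity
  -- derivative of G
  have hGderiv : ∀ x : ℝ, 1 ≤ x → HasDerivAt G (g x) x := by
    intro x hx
    have hx0 : x ≠ 0 := by intro h; rw [h] at hx; linarith
    have h1 := exp_sq_hasDeriv ε x
    have h2 := h1.div (hasDerivAt_pow 2 x) (pow_ne_zero 2 hx0)
    refine h2.congr_deriv ?_
    rw [hg]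
    field_simp
    ring
  -- G tends to infinity
  have hGtop : Tendsto G atTop atTop := by
    have h1 := (tendsto_exp_div_pow_atTop 1).comp (sq_half_tendsto hε)
    have h2 := h1.const_mul_atTop (show (0:ℝ) < ε / 2 by linarith)
    refine h2.congr' ?_
    filter_upwards [eventually_gt_atTop (0:ℝ)] with r hr
    rw [hG]
    simp only [Function.comp_apply, pow_one]
    field_simp
  -- g eventually positive
  have hgpos : ∀ᶠ s in atTop, 0 < g s := by
    filter_upwards [eventually_gt_atTop (max 1 (2/ε))] with s hs
    have hs1 : (1:ℝ) < s := lt_of_le_of_lt (le_max_left _ _) hs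
    have hs2 : 2/ε < s := lt_of_le_of_lt (le_max_right _ _) hs
    have h2 : 0 < ε * s ^ 2 - 2 := by
      have h3 : 2/ε * ε < s * ε := by nlinarith
      rw [div_mul_cancel₀ _ hε.ne'] at h3
      nlinarith
    rw [hg]
    have : (0:ℝ) < s ^ 3 := by positivity
    positivity
  -- ratio f/g tends to 1/(ε*a)
  have hsecond : Tendsto (fun s : ℝ => s ^ 2 / (ε * s ^ 2 - 2)) atTop (nhds (1/ε)) := by
    have hb : Tendsto (fun s : ℝ => ε - 2 / s ^ 2) atTop (nhds ε) := by
      have h2 : Tendsto (fun s : ℝ => 2 / s ^ 2) atTop (nhds 0) := by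
        have h3 : Tendsto (fun s : ℝ => s ^ 2) atTop atTop := tendsto_pow_atTop two_ne_zero
        have h4 := h3.inv_tendsto_atTop
        have h5 := h4.const_mul (2:ℝ)
        simpa [div_eq_mul_inv] using h5
      simpa using tendsto_const_nhds.sub h2
    have h : Tendsto (fun s : ℝ => 1 / (ε - 2 / s ^ 2)) atTop (nhds (1 / ε)) :=
      (tendsto_const_nhds (x := (1:ℝ))).div hb hε.ne'
    refine h.congr' ?_
    filter_upwards [eventually_gt_atTop (max 1 (2/ε))] with s hs
    have hs1 : (1:ℝ) < s := lt_of_le_of_lt (le_max_left _ _) hs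
    have hs2 : 2/ε < s := lt_of_le_of_lt (le_max_right _ _) hs
    have h2 : 0 < ε * s ^ 2 - 2 := by
      have h3 : 2/ε * ε < s * ε := by nlinarith
      rw [div_mul_cancel₀ _ hε.ne'] at h3
      nlinarith
    have hs0 : s ≠ 0 := by positivity
    have h6 : ε - 2 / s ^ 2 ≠ 0 := by
      have h7 : 0 < ε - 2 / s ^ 2 := by
        rw [sub_pos, div_lt_iff₀ (by positivity)]
        nlinarith
      exact h7.ne'
    field_simp
  have hratio : Tendsto (fun s => f s / g s) atTop (nhds (1 / (ε * a))) := by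
    have hmul := (tail_tendsto ha).mul hsecond
    have hLeq : 1 / a * (1 / ε) = 1 / (ε * a) := by
      rw [div_mul_div_comm, one_mul, mul_comm]
    rw [hLeq] at hmul
    refine hmul.congr' ?_
    filter_upwards [eventually_gt_atTop (max 1 (2/ε))] with s hs
    have hs1 : (1:ℝ) < s := lt_of_le_of_lt (le_max_left _ _) hs
    have hs2 : 2/ε < s := lt_of_le_of_lt (le_max_right _ _) hs
    have h2 : 0 < ε * s ^ 2 - 2 := by
      have h3 : 2/ε * ε < s * ε := by nlinarith
      rw [div_mul_cancel₀ _ hε.ne'] at h3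
      nlinarith
    have hs0 : (0:ℝ) < s := by linarith
    have hexp : Real.exp (c * s ^ 2 / 2) = Real.exp (a * s ^ 2 / 2) * Real.exp (ε * s ^ 2 / 2) := by
      rw [← Real.exp_add]
      congr 1
      rw [ha']
      ring
    have hIs : (∫ u in Set.Ioi s, Real.exp (-a * u ^ 2 / 2)) = I s := rfl
    show (s * Real.exp (a * s ^ 2 / 2) * ∫ u in Set.Ioi s, Real.exp (-a * u ^ 2 / 2)) *
        (s ^ 2 / (ε * s ^ 2 - 2)) =
      Real.exp (c * s ^ 2 / 2) * I s / (Real.exp (ε * s ^ 2 / 2) * (ε * s ^ 2 - 2) / s ^ 3)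
    rw [hIs, hexp]
    have hE : Real.exp (ε * s ^ 2 / 2) ≠ 0 := (Real.exp_pos _).ne'
    field_simp
  -- main limit for psi1 / G
  have hmain : Tendsto (fun r => psi1 c ε r / G r) atTop (nhds (1 / (ε * a))) := by
    have := lhop hfc hgc hGderiv hGtop hgpos hratio
    refine this.congr fun r => ?_
    rw [hpsi1]
  -- G / psi2 tends to 1
  have hGpsi2 : Tendsto (fun r => G r / psi2 ε r) atTop (nhds 1) := by
    have h1 : Tendsto (fun r : ℝ => 1 + 1 / r) atTop (nhds 1) := by
      have h0 : Tendsto (fun r : ℝ => 1 / r) atTop (nhds 0) :=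
        tendsto_inv_atTop_zero.congr fun r => (one_div r).symm
      have h2 := (tendsto_const_nhds (x := (1:ℝ))).add h0
      simpa using h2
    have h2 : Tendsto (fun r : ℝ => 1 / (1 - Real.exp (-(ε * r ^ 2 / 2)))) atTop (nhds 1) := by
      have h3 : Tendsto (fun r : ℝ => Real.exp (-(ε * r ^ 2 / 2))) atTop (nhds 0) :=
        Real.tendsto_exp_atBot.comp (tendsto_neg_atBot_iff.mpr (sq_half_tendsto hε))
      have h4 : Tendsto (fun r : ℝ => (1:ℝ) / (1 - Real.exp (-(ε * r ^ 2 / 2)))) atTop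
          (nhds (1 / (1 - 0))) :=
        (tendsto_const_nhds (x := (1:ℝ))).div (tendsto_const_nhds.sub h3)
          (by norm_num : (1:ℝ) - 0 ≠ 0)
      simpa using h4
    have h5 := h1.mul h2
    rw [mul_one] at h5
    refine h5.congr' ?_
    filter_upwards [eventually_gt_atTop (0:ℝ)] with r hr
    have hE1 : 1 < Real.exp (ε * r ^ 2 / 2) := by
      have hpos : 0 < ε * r ^ 2 / 2 := by positivity
      have := Real.add_one_le_exp (ε * r ^ 2 / 2)
      linarith
    have hEne : Real.exp (ε * r ^ 2 / 2) - 1 ≠ 0 := by linarith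
    have hE0 : Real.exp (ε * r ^ 2 / 2) ≠ 0 := (Real.exp_pos _).ne'
    rw [hG]
    unfold psi2
    rw [Real.exp_neg]
    have hr0 : r ≠ 0 := hr.ne'
    field_simp
    ring
  -- combine
  have hfinal := hmain.mul hGpsi2
  rw [mul_one] at hfinal
  rw [show (1 : ℝ) / (ε * (c - ε)) = 1 / (ε * a) by rw [← ha']]
  refine hfinal.congr' ?_
  filter_upwards [eventually_gt_atTop (0:ℝ)] with r hr
  have hGr : G r ≠ 0 := by
    rw [hG]
    have : (0:ℝ) < r ^ 2 := by positivity
    positivity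
  rw [div_mul_div_comm, mul_comm (G r) (psi2 ε r), mul_div_mul_right _ _ hGr]
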